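/- Let n ≥ 3 be a natural number and ξ ∈ ℝⁿ a nonzero vector. On the space Sym²(ℝⁿ) of symmetric real n×n matrices, equipped with the Frobenius inner product ⟨h, k⟩ = trace(h·k), define: tf(h) = h − (trace(h)/n) Iₙ; for ω ∈ ℝⁿ, ξ⊙ω = (1/2)(ξωᵀ + ωξᵀ); and M(ξ) = (1/2)|ξ|² Iₙ + ((n−2)/(2n)) ξξᵀ (which is invertible). Define Π(ξ) : Sym²(ℝⁿ) → Sym²(ℝⁿ) by Π(ξ)h = tf(h) − tf( ξ ⊙ ( M(ξ)^{−1} ( (tf h)·ξ ) ) ), where (tf h)·ξ is the matrix-vector product. Then Π(ξ) is the orthogonal projection of Sym²(ℝⁿ) onto the subspace K(ξ) = { h ∈ Sym²(ℝⁿ) : trace(h) = 0 and h·ξ = 0 }: that is, for every h, Π(ξ)h ∈ K(ξ); Π(ξ)h = h whenever h ∈ K(ξ); and h − Π(ξ)h is orthogonal to K(ξ) with respect to the Frobenius inner product. -/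

import Mathlib

/-- The trace-free part `tf(h) = h − (trace(h)/n) Iₙ` of a square matrix. -/
noncomputable def tf (n : ℕ) (h : Matrix (Fin n) (Fin n) ℝ) : Matrix (Fin n) (Fin n) ℝ :=
  h - (Matrix.trace h / n) • (1 : Matrix (Fin n) (Fin n) ℝ)

/-- The symmetric product `ξ⊙ω = (1/2)(ξωᵀ + ωξᵀ)`. -/
noncomputable def sprod (n : ℕ) (ξ ω : Fin n → ℝ) : Matrix (Fin n) (Fin n) ℝ :=
  (1 / 2 : ℝ) • (Matrix.vecMulVec ξ ω + Matrix.vecMulVec ω ξ)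

/-- The symbol matrix `M(ξ) = (1/2)|ξ|² Iₙ + ((n−2)/(2n)) ξξᵀ`. -/
noncomputable def Mmat (n : ℕ) (ξ : Fin n → ℝ) : Matrix (Fin n) (Fin n) ℝ :=
  (1 / 2 * ∑ i, ξ i ^ 2) • (1 : Matrix (Fin n) (Fin n) ℝ)
    + (((n : ℝ) - 2) / (2 * n)) • Matrix.vecMulVec ξ ξ

/-- The symbol `Π(ξ)h = tf(h) − tf(ξ ⊙ (M(ξ)⁻¹((tf h)·ξ)))` of the projection operator
`Θ_{g₀}` onto trace-free, divergence-free symmetric 2-tensors. -/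
noncomputable def projSym (n : ℕ) (ξ : Fin n → ℝ) (h : Matrix (Fin n) (Fin n) ℝ) :
    Matrix (Fin n) (Fin n) ℝ :=
  tf n h - tf n (sprod n ξ ((Mmat n ξ)⁻¹.mulVec ((tf n h).mulVec ξ)))

open Matrix in
lemma vmv_mulVec {n : ℕ} (x y v : Fin n → ℝ) :
    (Matrix.vecMulVec x y).mulVec v = (y ⬝ᵥ v) • x := by
  ext i
  simp [Matrix.mulVec, Matrix.vecMulVec_apply, dotProduct, Finset.sum_mul, Finset.mul_sum]
  apply Finset.sum_congr rfl; intros; ring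

open Matrix in
lemma vmv_mul_vmv {n : ℕ} (x y z w : Fin n → ℝ) :
    Matrix.vecMulVec x y * Matrix.vecMulVec z w = (y ⬝ᵥ z) • Matrix.vecMulVec x w := by
  ext i j
  simp [Matrix.mul_apply, Matrix.vecMulVec_apply, dotProduct, Finset.sum_mul, Finset.mul_sum]
  ring_nf
  apply Finset.sum_congr rfl; intros; ring

open Matrix in
lemma trace_vmv {n : ℕ} (x y : Fin n → ℝ) : Matrix.trace (Matrix.vecMulVec x y) = x ⬝ᵥ y := by
  simp [Matrix.trace, Matrix.vecMulVec_apply, dotProduct, Matrix.diag]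

open Matrix in
lemma trace_vmv_mul {n : ℕ} (x y : Fin n → ℝ) (k : Matrix (Fin n) (Fin n) ℝ) :
    Matrix.trace (Matrix.vecMulVec x y * k) = x ⬝ᵥ (Matrix.vecMul y k) := by
  simp [Matrix.trace, Matrix.mul_apply, Matrix.vecMulVec_apply, dotProduct, Matrix.vecMul,
    Matrix.diag, Finset.mul_sum, mul_assoc]

open Matrix in
lemma transpose_vmv {n : ℕ} (x y : Fin n → ℝ) :
    (Matrix.vecMulVec x y)ᵀ = Matrix.vecMulVec y x := by
  ext i j; simp [Matrix.vecMulVec_apply, mul_comm]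

open Matrix in
lemma tf_mulVec {n : ℕ} (h : Matrix (Fin n) (Fin n) ℝ) (v : Fin n → ℝ) :
    (tf n h).mulVec v = h.mulVec v - (Matrix.trace h / n) • v := by
  simp [tf, Matrix.sub_mulVec, Matrix.smul_mulVec, Matrix.one_mulVec]

open Matrix in
lemma sprod_mulVec {n : ℕ} (x w v : Fin n → ℝ) :
    (sprod n x w).mulVec v = (1 / 2 : ℝ) • ((w ⬝ᵥ v) • x + (x ⬝ᵥ v) • w) := by
  simp only [sprod, Matrix.smul_mulVec, Matrix.add_mulVec, vmv_mulVec]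

open Matrix in
lemma trace_sprod {n : ℕ} (x w : Fin n → ℝ) : Matrix.trace (sprod n x w) = x ⬝ᵥ w := by
  simp [sprod, Matrix.trace_smul, Matrix.trace_add, trace_vmv, dotProduct_comm w x,
    smul_eq_mul]
  ring

open Matrix in
lemma vecMul_symm_zero {n : ℕ} (x : Fin n → ℝ) (k : Matrix (Fin n) (Fin n) ℝ)
    (hk : k.IsSymm) (hkx : k.mulVec x = 0) : Matrix.vecMul x k = 0 := by
  have h1 : kᵀ.mulVec x = Matrix.vecMul x k := Matrix.mulVec_transpose k x
  rw [hk.eq] at h1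
  rw [← h1, hkx]

open Matrix in
lemma trace_sprod_mul {n : ℕ} (x w : Fin n → ℝ) (k : Matrix (Fin n) (Fin n) ℝ)
    (hk : k.IsSymm) (hkx : k.mulVec x = 0) : Matrix.trace (sprod n x w * k) = 0 := by
  have hvk : Matrix.vecMul x k = 0 := vecMul_symm_zero x k hk hkx
  have hwk : Matrix.vecMul w k = k.mulVec w := by
    have h1 : kᵀ.mulVec w = Matrix.vecMul w k := Matrix.mulVec_transpose k w
    rw [hk.eq] at h1
    exact h1.symm
  have t1 : x ⬝ᵥ Matrix.vecMul w k = 0 := by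
    rw [hwk, dotProduct_mulVec, hvk, zero_dotProduct]
  have t2 : w ⬝ᵥ Matrix.vecMul x k = 0 := by
    rw [hvk, dotProduct_zero]
  simp only [sprod, smul_mul_assoc, add_mul, Matrix.trace_smul, Matrix.trace_add,
    trace_vmv_mul, t1, t2, add_zero, smul_zero]

open Matrix

/-- For `n ≥ 3` and a nonzero `ξ ∈ ℝⁿ`, the matrix `M(ξ)` is invertible and
`Π(ξ)` is the orthogonal projection of the symmetric matrices `Sym²(ℝⁿ)` (with the Frobenius
inner product `⟨h,k⟩ = trace(h·k)`) onto `K(ξ) = {h : h symmetric, trace(h) = 0, h·ξ = 0}`: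
for every symmetric `h`, `Π(ξ)h ∈ K(ξ)`; `Π(ξ)h = h` whenever `h ∈ K(ξ)`; and `h − Π(ξ)h`
is Frobenius-orthogonal to `K(ξ)`. -/
theorem projection_onto_tt_tensors (n : ℕ) (hn : 3 ≤ n) (ξ : Fin n → ℝ) (hξ : ξ ≠ 0) :
    IsUnit (Mmat n ξ)
      ∧ (∀ h : Matrix (Fin n) (Fin n) ℝ, h.IsSymm →
          (projSym n ξ h).IsSymm ∧ Matrix.trace (projSym n ξ h) = 0
            ∧ (projSym n ξ h).mulVec ξ = 0)
      ∧ (∀ h : Matrix (Fin n) (Fin n) ℝ, h.IsSymm → Matrix.trace h = 0 → h.mulVec ξ = 0 →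
          projSym n ξ h = h)
      ∧ (∀ h : Matrix (Fin n) (Fin n) ℝ, h.IsSymm →
          ∀ k : Matrix (Fin n) (Fin n) ℝ, k.IsSymm → Matrix.trace k = 0 → k.mulVec ξ = 0 →
            Matrix.trace ((h - projSym n ξ h) * k) = 0) := by
  have hn0 : (n : ℝ) ≠ 0 := by
    have : (0 : ℝ) < n := by exact_mod_cast Nat.lt_of_lt_of_le (by norm_num) hn
    exact ne_of_gt this
  have hn1 : (n : ℝ) - 1 ≠ 0 := by
    have : (1 : ℝ) < n := by exact_mod_cast Nat.lt_of_lt_of_le (by norm_num) hn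
    intro h; nlinarith
  have hs : (∑ i, ξ i ^ 2) ≠ 0 := by
    have : ∃ i, ξ i ≠ 0 := by
      by_contra hc
      push_neg at hc
      exact hξ (funext hc)
    obtain ⟨i, hi⟩ := this
    have h1 : 0 < ∑ i, ξ i ^ 2 := by
      apply Finset.sum_pos' (fun j _ => sq_nonneg _)
      exact ⟨i, Finset.mem_univ i, by positivity⟩
    exact ne_of_gt h1
  set s : ℝ := ∑ i, ξ i ^ 2 with hsdef
  have hxx : ξ ⬝ᵥ ξ = s := by
    simp [dotProduct, hsdef, sq]
  -- the explicit inverse of Mmat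
  have hMN : Mmat n ξ * ((2 / s) • 1
      + (-((n : ℝ) - 2) / (s ^ 2 * ((n : ℝ) - 1))) • Matrix.vecMulVec ξ ξ) = 1 := by
    rw [Mmat]
    rw [add_mul, mul_add, mul_add]
    simp only [smul_mul_assoc, mul_smul_comm, one_mul, mul_one, vmv_mul_vmv, hxx, smul_smul,
      ← hsdef]
    match_scalars <;> field_simp <;> ring
  have hunit : IsUnit (Mmat n ξ) := (Matrix.isUnit_iff_isUnit_det _).2 (Matrix.isUnit_det_of_right_inverse hMN)
  have hInv : (Mmat n ξ)⁻¹ = (2 / s) • 1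
      + (-((n : ℝ) - 2) / (s ^ 2 * ((n : ℝ) - 1))) • Matrix.vecMulVec ξ ξ :=
    Matrix.inv_eq_right_inv hMN
  -- basic tf facts
  have htrtf : ∀ h : Matrix (Fin n) (Fin n) ℝ, Matrix.trace (tf n h) = 0 := by
    intro h
    simp [tf, Matrix.trace_sub, Matrix.trace_smul, Matrix.trace_one, Fintype.card_fin]
    field_simp
    ring
  have htf_symm : ∀ h : Matrix (Fin n) (Fin n) ℝ, h.IsSymm → (tf n h).IsSymm := by
    intro h hh
    simp [tf, Matrix.IsSymm, Matrix.transpose_sub, Matrix.transpose_smul, Matrix.transpose_one,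
      hh.eq]
  have hsprod_symm : ∀ x w : Fin n → ℝ, (sprod n x w).IsSymm := by
    intro x w
    simp only [sprod, Matrix.IsSymm, Matrix.transpose_smul, Matrix.transpose_add, transpose_vmv]
    rw [add_comm]
  -- the key mulVec computation
  have hkey : ∀ h : Matrix (Fin n) (Fin n) ℝ, (projSym n ξ h).mulVec ξ = 0 := by
    intro h
    rw [projSym, Matrix.sub_mulVec]
    set u : Fin n → ℝ := (tf n h).mulVec ξ with hudef
    have hw : ((Mmat n ξ)⁻¹).mulVec u
        = (2 / s) • u + ((-((n : ℝ) - 2) / (s ^ 2 * ((n : ℝ) - 1))) * (ξ ⬝ᵥ u)) • ξ := by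
      rw [hInv, Matrix.add_mulVec, Matrix.smul_mulVec, Matrix.one_mulVec,
        Matrix.smul_mulVec, vmv_mulVec, smul_smul]
    rw [hw, tf_mulVec, sprod_mulVec, trace_sprod]
    simp only [dotProduct_add, add_dotProduct, dotProduct_smul, smul_dotProduct,
      smul_eq_mul, hxx, dotProduct_comm u ξ]
    match_scalars <;> field_simp <;> ring
  refine ⟨hunit, ?_, ?_, ?_⟩
  · intro h hh
    refine ⟨?_, ?_, hkey h⟩
    · exact Matrix.IsSymm.sub (htf_symm h hh) (htf_symm _ (hsprod_symm _ _))
    · rw [projSym, Matrix.trace_sub, htrtf, htrtf, sub_zero]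
  · intro h hh htr0 hmv0
    have h1 : tf n h = h := by simp [tf, htr0]
    have h2 : (tf n h).mulVec ξ = 0 := by rw [h1, hmv0]
    have h3 : sprod n ξ (((Mmat n ξ)⁻¹).mulVec ((tf n h).mulVec ξ)) = 0 := by
      rw [h2, Matrix.mulVec_zero]
      ext i j
      simp [sprod, Matrix.vecMulVec_apply]
    rw [projSym, h3, h1]
    simp [tf]
  · intro h hh k hk htrk hkξ
    have hsplit : h - projSym n ξ h = (Matrix.trace h / n) • 1
        + tf n (sprod n ξ (((Mmat n ξ)⁻¹).mulVec ((tf n h).mulVec ξ))) := by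
      rw [projSym]
      simp only [tf]
      abel
    rw [hsplit, add_mul, Matrix.trace_add, smul_mul_assoc, Matrix.trace_smul, one_mul, htrk,
      smul_zero, zero_add, tf, sub_mul, smul_mul_assoc, one_mul, Matrix.trace_sub,
      Matrix.trace_smul, htrk, smul_zero, sub_zero, trace_sprod_mul _ _ k hk hkξ]
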